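/- Let w ≥ 4 and 0 ≤ k ≤ w−2. In the ring of w×w matrices over the Laurent polynomial ring F₂[D, D⁻¹], regarding B and C as matrices with entries in F₂ ⊆ F₂[D, D⁻¹], one has (B + D^{-1}·C)^k = B^k + D^{-1}·Q_k, where Q_k := Σ_{i=0}^{k-1} B^i·C·B^{k-1-i}. -/
import Mathlib


open Matrix

/-- The matrix `B` of MT-type recursions: first row zero, row `i` (0-indexed,
`1 ≤ i ≤ w-2`) is the standard basis row vector with a `1` in column `i+1`,
and the last row is `(a_{w-1}, …, a_0)` (stored as `a 0, …, a (w-1)`). -/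
def mtB (w : ℕ) (a : Fin w → ZMod 2) : Matrix (Fin w) (Fin w) (ZMod 2) :=
  Matrix.of fun i j =>
    if (i : ℕ) = w - 1 then a j
    else if 1 ≤ (i : ℕ) ∧ (j : ℕ) = (i : ℕ) + 1 then 1 else 0

/-- The matrix `C`: its only nonzero entry is a `1` in position `(1,2)` (1-indexed). -/
def mtC (w : ℕ) : Matrix (Fin w) (Fin w) (ZMod 2) :=
  Matrix.of fun i j => if (i : ℕ) = 0 ∧ (j : ℕ) = 1 then 1 else 0

/-- `Q_k = Σ_{i=0}^{k-1} B^i · C · B^{k-1-i}`. -/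
def mtQ (w : ℕ) (a : Fin w → ZMod 2) (k : ℕ) : Matrix (Fin w) (Fin w) (ZMod 2) :=
  ∑ i ∈ Finset.range k, (mtB w a) ^ i * mtC w * (mtB w a) ^ (k - 1 - i)


lemma CBpow (w : ℕ) (hw : 4 ≤ w) (a : Fin w → ZMod 2) (j : ℕ) (hj : j ≤ w - 3) (i l : Fin w) :
    (mtC w * (mtB w a) ^ j) i l = if (i : ℕ) = 0 ∧ (l : ℕ) = j + 1 then 1 else 0 := by
  induction j generalizing l with
  | zero => simp [mtC]
  | succ j ih =>
    have hj' : j ≤ w - 3 := by omega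
    rw [pow_succ, ← mul_assoc, Matrix.mul_apply]
    have hjw : j + 1 < w := by omega
    rw [Finset.sum_eq_single (⟨j + 1, hjw⟩ : Fin w)]
    · rw [ih hj']
      by_cases hi : (i : ℕ) = 0
      · simp only [hi, true_and, mtB, Matrix.of_apply]
        have : (j : ℕ) + 1 ≠ w - 1 := by omega
        simp [this]
      · simp [hi]
    · intro b _ hb
      rw [ih hj']
      have : ¬ ((i:ℕ) = 0 ∧ (b:ℕ) = j + 1) := by
        rintro ⟨h1, h2⟩
        exact hb (Fin.ext h2)
      simp [this]
    · simp

lemma CBC (w : ℕ) (hw : 4 ≤ w) (a : Fin w → ZMod 2) (j : ℕ) (hj : j ≤ w - 3) :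
    mtC w * (mtB w a) ^ j * mtC w = 0 := by
  ext i l
  rw [Matrix.mul_apply, Matrix.zero_apply]
  apply Finset.sum_eq_zero
  intro r _
  rw [CBpow w hw a j hj]
  simp only [mtC, Matrix.of_apply, ite_mul, mul_ite, one_mul, mul_one, zero_mul, mul_zero]
  split_ifs <;> simp_all

lemma QC (w : ℕ) (hw : 4 ≤ w) (a : Fin w → ZMod 2) (k : ℕ) (hk : k ≤ w - 2) :
    mtQ w a k * mtC w = 0 := by
  unfold mtQ
  rw [Finset.sum_mul]
  apply Finset.sum_eq_zero
  intro i hi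
  have h := CBC w hw a (k - 1 - i) (by omega)
  simp only [mul_assoc] at h ⊢
  rw [h, mul_zero]

lemma Qsucc (w : ℕ) (a : Fin w → ZMod 2) (k : ℕ) :
    mtQ w a (k + 1) = mtQ w a k * mtB w a + (mtB w a) ^ k * mtC w := by
  unfold mtQ
  rw [Finset.sum_range_succ, Finset.sum_mul]
  congr 1
  · apply Finset.sum_congr rfl
    intro i hi
    have hi' : i < k := Finset.mem_range.mp hi
    have h1 : k + 1 - 1 - i = (k - 1 - i) + 1 := by omega
    rw [h1, pow_succ, mul_assoc, mul_assoc, mul_assoc]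
  · simp

/-- `(B + D⁻¹·C)^k = B^k + D⁻¹·Q_k` over `F₂[D, D⁻¹]` for `k ≤ w - 2`. -/
theorem stmt6 (w : ℕ) (hw : 4 ≤ w) (a : Fin w → ZMod 2) (k : ℕ) (hk : k ≤ w - 2) :
    ((mtB w a).map LaurentPolynomial.C
      + (LaurentPolynomial.T (-1) : LaurentPolynomial (ZMod 2)) • (mtC w).map LaurentPolynomial.C) ^ k
    = ((mtB w a) ^ k).map LaurentPolynomial.C
      + (LaurentPolynomial.T (-1) : LaurentPolynomial (ZMod 2)) • (mtQ w a k).map LaurentPolynomial.C := by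
  induction k with
  | zero => simp [mtQ, Matrix.map_one]
  | succ k ih =>
    have hk' : k ≤ w - 2 := by omega
    set f := (LaurentPolynomial.C : ZMod 2 →+* LaurentPolynomial (ZMod 2))
    set t : LaurentPolynomial (ZMod 2) := LaurentPolynomial.T (-1)
    have hQC : (mtQ w a k).map f * (mtC w).map f = 0 := by
      rw [← Matrix.map_mul, QC w hw a k hk']
      exact Matrix.map_zero _ (map_zero f)
    rw [pow_succ, ih hk', Qsucc, pow_succ, Matrix.map_add _ (map_add f), Matrix.map_mul, Matrix.map_mul,
      Matrix.map_mul, add_mul, mul_add, mul_add, smul_mul_assoc, smul_mul_assoc,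
      mul_smul_comm, mul_smul_comm, hQC, smul_zero, smul_zero, add_zero]
    have hpk : ((mtB w a) ^ k).map f = ((mtB w a).map f) ^ k := by
      simpa [RingHom.mapMatrix_apply] using map_pow f.mapMatrix (mtB w a) k
    rw [hpk]
    module
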